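/- For a partition μ of length n ≥ 2 with μ_n > 0, defining Q'_μ(x₁,x₂;q) = B_{μ₁}∘⋯∘B_{μ_n}(1), one has the recursion Q'_μ(x₁,x₂;q) = q^{n-1-μ'_{μ_{n-1}+1}}·Q'_{μ⁺}(x₁,x₂;q) + q^{(n-2)μ_n}·(x₁x₂)^{μ_n}·Q'_{μ⁻}(x₁,x₂;q), where μ⁻ = (μ₁,...,μ_{n-2}, μ_{n-1}-μ_n), μ⁺ is the sorted rearrangement of (μ₁,...,μ_{n-2}, μ_{n-1}+1, μ_n-1), and μ' denotes the conjugate partition. -/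

import Mathlib

/-- The q-Bernstein operator on (two-variable) functions over a field. -/
def qBernstein {K : Type*} [Field K] (q : K) (m : ℕ) (f : K → K → K) : K → K → K :=
  fun x₁ x₂ => (x₁ ^ (m + 1) * f (q * x₁) x₂ - x₂ ^ (m + 1) * f x₁ (q * x₂)) / (x₁ - x₂)

/-- Modified Hall–Littlewood polynomial `Q'_μ = B_{μ₁} ⋯ B_{μ_n}(1)` for a list `μ`. -/
def Qmod {K : Type*} [Field K] (q : K) : List ℕ → (K → K → K)
  | [] => fun _ _ => (1 : K)
  | m :: rest => qBernstein q m (Qmod q rest)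

/-- Sort a list of naturals into weakly decreasing order. -/
def sortDesc (l : List ℕ) : List ℕ := l.mergeSort (fun a b => decide (b ≤ a))

lemma sortDesc_sorted (L : List ℕ) : List.Pairwise (· ≥ ·) (sortDesc L) := by
  have := List.pairwise_mergeSort (le := fun a b : ℕ => decide (b ≤ a))
    (fun a b c h1 h2 => by simp_all; omega)
    (fun a b => by simp; omega) L
  exact this.imp (fun h => by simpa using h)

lemma sortDesc_eq_of {L M : List ℕ} (h : L.Perm M) (hM : List.Pairwise (· ≥ ·) M) :
    sortDesc L = M := by
  haveI : Std.Antisymm (· ≥ · : ℕ → ℕ → Prop) := ⟨fun a b h1 h2 => le_antisymm h2 h1⟩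
  exact List.Perm.eq_of_pairwise' (sortDesc_sorted L) hM ((List.mergeSort_perm L _).trans h)

lemma sorted_append_singleton {l : List ℕ} {v : ℕ} (h : List.Pairwise (· ≥ ·) l)
    (hv : ∀ x ∈ l, v ≤ x) : List.Pairwise (· ≥ ·) (l ++ [v]) := by
  induction l with
  | nil => simp
  | cons y t ihh =>
    rw [List.cons_append, List.pairwise_cons] at *
    obtain ⟨h1, h2⟩ := h
    refine ⟨fun z hz => ?_, ihh h2 (fun x hx => hv x (List.mem_cons_of_mem _ hx))⟩
    rcases List.mem_append.mp hz with hz | hz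
    · exact h1 z hz
    · simp at hz; subst hz; exact hv y List.mem_cons_self

theorem stmt_9 {K : Type*} [Field K] (q : K) (l : List ℕ) (a b : ℕ)
    (hsort : List.Pairwise (· ≥ ·) (l ++ [a, b])) (hb : 0 < b)
    (x₁ x₂ : K)
    (hx : ∀ i j : ℕ, i + j ≤ l.length + 2 → q ^ i * x₁ ≠ q ^ j * x₂) :
    Qmod q (l ++ [a, b]) x₁ x₂
      = q ^ (l.length + 2 - 1 - (l ++ [a, b]).countP (fun x => decide (a + 1 ≤ x)))
          * Qmod q (sortDesc (l ++ [a + 1, b - 1])) x₁ x₂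
        + q ^ (l.length * b) * (x₁ * x₂) ^ b * Qmod q (l ++ [a - b]) x₁ x₂ := by
  induction l generalizing x₁ x₂ with
  | nil =>
    have h0 : x₁ - x₂ ≠ 0 := sub_ne_zero_of_ne (by simpa using hx 0 0 (by omega))
    have h1 : q * x₁ - x₂ ≠ 0 := sub_ne_zero_of_ne (by simpa using hx 1 0 (by omega))
    have h2 : x₁ - q * x₂ ≠ 0 := sub_ne_zero_of_ne (by simpa using hx 0 1 (by omega))
    have hab : b ≤ a := by
      simp only [List.nil_append, List.pairwise_cons] at hsort
      exact hsort.1 b (by simp)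
    obtain ⟨d, rfl⟩ : ∃ d, b = d + 1 := ⟨b - 1, by omega⟩
    obtain ⟨c, rfl⟩ : ∃ c, a = c + d + 1 := ⟨a - (d + 1), by omega⟩
    have hcnt : (([] : List ℕ) ++ [c + d + 1, d + 1]).countP
        (fun x => decide (c + d + 1 + 1 ≤ x)) = 0 := by
      simp only [List.countP_eq_zero]
      intro x hxm
      simp only [List.nil_append, List.mem_cons, List.not_mem_nil, or_false] at hxm
      simp only [decide_eq_true_eq]
      omega
    rw [hcnt]
    have hsub1 : c + d + 1 - (d + 1) = c := by omega
    have hsub2 : d + 1 - 1 = d := by omega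
    rw [hsub1, hsub2]
    have hsd : sortDesc (([] : List ℕ) ++ [c + d + 1 + 1, d]) = [c + d + 1 + 1, d] := by
      apply sortDesc_eq_of (List.Perm.refl _)
      simp [List.pairwise_cons]
      omega
    rw [hsd]
    simp only [List.nil_append, List.length_nil, Qmod, qBernstein, mul_pow]
    norm_num
    field_simp
    ring
  | cons c l' ih =>
    simp only [List.cons_append, List.length_cons, List.pairwise_cons] at hsort hx ⊢
    obtain ⟨hc, hsort'⟩ := hsort
    have hca : a ≤ c := hc a (by simp)
    have hab : b ≤ a := by
      have := (List.pairwise_append.mp hsort').2.1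
      simp only [List.pairwise_cons] at this
      exact this.1 b (by simp)
    have hla : ∀ x ∈ l', a ≤ x := fun x hxl =>
      (List.pairwise_append.mp hsort').2.2 x hxl a (by simp)
    have h0 : x₁ - x₂ ≠ 0 := sub_ne_zero_of_ne (by simpa using hx 0 0 (by omega))
    have h1 : q * x₁ - x₂ ≠ 0 := sub_ne_zero_of_ne (by simpa using hx 1 0 (by omega))
    have h2 : x₁ - q * x₂ ≠ 0 := sub_ne_zero_of_ne (by simpa using hx 0 1 (by omega))
    have hx1 : ∀ i j : ℕ, i + j ≤ l'.length + 2 → q ^ i * (q * x₁) ≠ q ^ j * x₂ := by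
      intro i j hij heq
      exact hx (i + 1) j (by omega) (by rw [pow_succ, mul_assoc]; exact heq)
    have hx2 : ∀ i j : ℕ, i + j ≤ l'.length + 2 → q ^ i * x₁ ≠ q ^ j * (q * x₂) := by
      intro i j hij heq
      exact hx i (j + 1) (by omega) (by rw [pow_succ, mul_assoc]; exact heq)
    have IH1 := ih hsort' (q * x₁) x₂ hx1
    have IH2 := ih hsort' x₁ (q * x₂) hx2
    by_cases hc1 : a + 1 ≤ c
    · -- c stays on top
      have hS : sortDesc (c :: (l' ++ [a + 1, b - 1]))
          = c :: sortDesc (l' ++ [a + 1, b - 1]) := by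
        apply sortDesc_eq_of (List.Perm.cons c (List.mergeSort_perm _ _).symm)
        rw [List.pairwise_cons]
        refine ⟨fun x hxm => ?_, sortDesc_sorted _⟩
        have hxm' : x ∈ l' ++ [a + 1, b - 1] :=
          (List.mergeSort_perm _ _).mem_iff.mp hxm
        rcases List.mem_append.mp hxm' with h | h
        · exact hc x (List.mem_append_left _ h)
        · simp only [List.mem_cons, List.not_mem_nil, or_false] at h
          rcases h with rfl | rfl <;> omega
      have hcnt : (c :: (l' ++ [a, b])).countP (fun x => decide (a + 1 ≤ x))
          = (l' ++ [a, b]).countP (fun x => decide (a + 1 ≤ x)) + 1 := by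
        rw [List.countP_cons]
        simp [hc1]
      rw [hS, hcnt]
      have hee : l'.length + 1 + 2 - 1 -
            ((l' ++ [a, b]).countP (fun x => decide (a + 1 ≤ x)) + 1)
          = l'.length + 2 - 1 - (l' ++ [a, b]).countP (fun x => decide (a + 1 ≤ x)) := by
        omega
      rw [hee]
      simp only [Qmod, qBernstein]
      rw [IH1, IH2]
      have hbb : (l'.length + 1) * b = l'.length * b + b := by ring
      rw [hbb, pow_add]
      simp only [mul_pow]
      field_simp
      ring
    · -- c = a
      have hceq : c = a := le_antisymm (by omega) hca
      subst hceq
      have hLW : List.Pairwise (· ≥ ·) (l' ++ [b - 1]) := by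
        refine sorted_append_singleton ?_ (fun x hxm => by have := hla x hxm; omega)
        exact hsort'.sublist (List.sublist_append_left _ _)
      have hmem : ∀ x ∈ l' ++ [b - 1], x ≤ c := by
        intro x hxm
        rcases List.mem_append.mp hxm with h | h
        · exact hc x (List.mem_append_left _ h)
        · have hxb : x = b - 1 := by simpa using h
          omega
      have hS' : sortDesc (l' ++ [c + 1, b - 1]) = (c + 1) :: (l' ++ [b - 1]) := by
        apply sortDesc_eq_of List.perm_middle
        rw [List.pairwise_cons]
        exact ⟨fun x hxm => le_trans (hmem x hxm) (by omega), hLW⟩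
      have hS : sortDesc (c :: (l' ++ [c + 1, b - 1])) = (c + 1) :: c :: (l' ++ [b - 1]) := by
        apply sortDesc_eq_of
        · exact (List.Perm.cons c List.perm_middle).trans (List.Perm.swap (c + 1) c _)
        · rw [List.pairwise_cons, List.pairwise_cons]
          refine ⟨fun x hxm => ?_, hmem, hLW⟩
          rcases List.mem_cons.mp hxm with rfl | hxm
          · omega
          · exact le_trans (hmem x hxm) (by omega)
      have hcnt : (c :: (l' ++ [c, b])).countP (fun x => decide (c + 1 ≤ x)) = 0 := by
        simp only [List.countP_eq_zero]
        intro x hxm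
        simp only [List.mem_cons, List.mem_append, List.not_mem_nil, or_false] at hxm
        simp only [decide_eq_true_eq]
        rcases hxm with rfl | hxm
        · omega
        · rcases hxm with h | h
          · have := hc x (List.mem_append_left _ h); omega
          · rcases h with rfl | rfl <;> omega
      have hcnt' : (l' ++ [c, b]).countP (fun x => decide (c + 1 ≤ x)) = 0 := by
        simp only [List.countP_eq_zero]
        intro x hxm
        simp only [List.mem_append, List.mem_cons, List.not_mem_nil, or_false] at hxm
        simp only [decide_eq_true_eq]
        rcases hxm with h | h
        · have := hc x (List.mem_append_left _ h); omega
        · rcases h with rfl | rfl <;> omega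
      rw [hS, hcnt]
      rw [hS', hcnt'] at IH1 IH2
      have he : l'.length + 1 + 2 - 1 - 0 = l'.length + 2 := by omega
      have he' : l'.length + 2 - 1 - 0 = l'.length + 1 := by omega
      rw [he]
      rw [he'] at IH1 IH2
      simp only [Qmod, qBernstein]
      rw [IH1, IH2]
      simp only [Qmod, qBernstein]
      have hbb : (l'.length + 1) * b = l'.length * b + b := by ring
      rw [hbb, pow_add]
      simp only [mul_pow]
      have h1' : x₁ * q - x₂ ≠ 0 := by rw [mul_comm]; exact h1
      field_simp
      ring
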